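/- For every n ≥ 1 and every k with 0 ≤ k ≤ n, the number of labeled plane trees with n edges having exactly k improper edges equals the number of labeled plane trees with n edges having exactly k proper edges; i.e., the statistics impr and prop are equidistributed over the set 𝒫_n of labeled plane trees with n edges. -/

import Mathlib

/-- A plane tree with labeled vertices: a root label together with an ordered
list of child subtrees.  (A plane tree is a rooted tree in which the children
of each node are linearly ordered.) -/
inductive LTree : Type where
  | node : ℕ → List LTree → LTree

namespace LTree

/-- The label of the root. -/
def rootLabel : LTree → ℕ
  | node a _ => a

/-- The list of child subtrees of the root. -/
def children : LTree → List LTree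
  | node _ cs => cs

/-- `deg_T(root)`: the number of children of the root. -/
def rootDeg (t : LTree) : ℕ := (children t).length

mutual
  /-- The list of all vertex labels of a tree. -/
  def labels : LTree → List ℕ
    | node a cs => a :: labelsList cs
  /-- The list of all vertex labels of a forest. -/
  def labelsList : List LTree → List ℕ
    | [] => []
    | c :: rest => labels c ++ labelsList rest
end

/-- `β(v)`: the smallest label occurring in the subtree `t` rooted at `v`. -/
def minLabel (t : LTree) : ℕ := (labels t).foldr min (rootLabel t)

/-- `min { j, β(c₁), …, β(cₖ) }` for a vertex `j` and a list of subtrees `c₁, …, cₖ`. -/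
def minOver (j : ℕ) (rest : List LTree) : ℕ := (rest.map minLabel).foldr min j

mutual
  /-- The list of edges of a tree, each recorded as a (parent label, child label)
  pair, in depth-first order. -/
  def edgeList : LTree → List (ℕ × ℕ)
    | node a cs => edgeListAux a cs
  def edgeListAux : ℕ → List LTree → List (ℕ × ℕ)
    | _, [] => []
    | a, c :: rest => (a, rootLabel c) :: (edgeList c ++ edgeListAux a rest)
end

mutual
  /-- The list of improper edges of a tree: if a vertex `j` has children
  `j₁, …, jₖ` (ordered left to right), the edge `(j, jᵢ)` is improper when
  `β(jᵢ) < min { j, β(j_{i+1}), …, β(jₖ) }`. -/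
  def improperEdges : LTree → List (ℕ × ℕ)
    | node a cs => improperEdgesAux a cs
  def improperEdgesAux : ℕ → List LTree → List (ℕ × ℕ)
    | _, [] => []
    | j, c :: rest =>
        (if minLabel c < minOver j rest then [(j, rootLabel c)] else [])
          ++ improperEdges c ++ improperEdgesAux j rest
end

mutual
  /-- The list of proper (i.e. non-improper) edges of a tree. -/
  def properEdges : LTree → List (ℕ × ℕ)
    | node a cs => properEdgesAux a cs
  def properEdgesAux : ℕ → List LTree → List (ℕ × ℕ)
    | _, [] => []
    | j, c :: rest =>
        (if minLabel c < minOver j rest then [] else [(j, rootLabel c)])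
          ++ properEdges c ++ properEdgesAux j rest
end

/-- `impr T`: the number of improper edges of `T`. -/
def impr (t : LTree) : ℕ := (improperEdges t).length

/-- `prop T`: the number of proper edges of `T`. -/
def propCount (t : LTree) : ℕ := (properEdges t).length

/-- The number of edges of `T`. -/
def edgeCount (t : LTree) : ℕ := (edgeList t).length

/-- `T` is a labeled plane tree with `n` edges: its `n + 1` vertices are labeled
bijectively with `{1, 2, …, n + 1}`. -/
def IsLPT (n : ℕ) (t : LTree) : Prop := (labels t).Perm (List.range' 1 (n + 1))

/-- `T` is increasing: vertex labels increase along every path from the root. -/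
inductive Increasing : LTree → Prop where
  | node (a : ℕ) (cs : List LTree) :
      (∀ c ∈ cs, a < rootLabel c) → (∀ c ∈ cs, Increasing c) → Increasing (node a cs)

end LTree


namespace LTree

lemma eta (t : LTree) : node t.rootLabel t.children = t := by cases t; rfl

lemma labels_node (a : ℕ) (cs : List LTree) : labels (node a cs) = a :: labelsList cs := by
  simp [labels]

lemma labelsList_cons (c : LTree) (cs : List LTree) :
    labelsList (c :: cs) = labels c ++ labelsList cs := by
  simp [labelsList]

lemma labels_length_pos (t : LTree) : 0 < (labels t).length := by
  cases t; simp [labels]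

lemma rootLabel_mem_labels (t : LTree) : t.rootLabel ∈ labels t := by
  cases t; simp [labels, rootLabel]

/-- folding `min` with a merged initial value -/
lemma foldr_min_min (l : List ℕ) (x y : ℕ) :
    l.foldr min (min x y) = min (l.foldr min x) y := by
  induction l with
  | nil => rfl
  | cons a t ih => simp [ih, min_assoc]

lemma foldr_min_le_init (l : List ℕ) (x : ℕ) : l.foldr min x ≤ x := by
  induction l with
  | nil => exact le_rfl
  | cons a t ih => exact le_trans (min_le_right _ _) ih

lemma foldr_min_absorb (l : List ℕ) (x y : ℕ) (h : y ∈ l) :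
    l.foldr min (min x y) = l.foldr min x := by
  induction l with
  | nil => cases h
  | cons a t ih =>
    rcases List.mem_cons.mp h with rfl | h
    · show min y (t.foldr min (min x y)) = min y (t.foldr min x)
      rw [foldr_min_min]
      rw [min_comm (t.foldr min x) y, ← min_assoc, min_self]
    · show min a (t.foldr min (min x y)) = min a (t.foldr min x)
      rw [ih h]

lemma minLabel_eq_foldr (t : LTree) (x : ℕ) :
    min (minLabel t) x = (labels t).foldr min x := by
  have hmem := rootLabel_mem_labels t
  show min ((labels t).foldr min t.rootLabel) x = (labels t).foldr min x
  rw [← foldr_min_min, min_comm t.rootLabel x, foldr_min_absorb _ _ _ hmem]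

lemma foldr_min_or (l : List ℕ) (x : ℕ) : l.foldr min x = x ∨ l.foldr min x ∈ l := by
  induction l with
  | nil => exact Or.inl rfl
  | cons a t ih =>
    simp only [List.foldr_cons]
    rcases le_total a (t.foldr min x) with h | h
    · right; rw [min_eq_left h]; exact List.mem_cons_self
    · rw [min_eq_right h]
      rcases ih with h' | h'
      · exact Or.inl h'
      · exact Or.inr (List.mem_cons_of_mem a h')


lemma minLabel_mem (t : LTree) : minLabel t ∈ labels t := by
  show (labels t).foldr min t.rootLabel ∈ labels t
  rcases foldr_min_or (labels t) t.rootLabel with h | h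
  · rw [h]; exact rootLabel_mem_labels t
  · exact h

lemma foldr_min_init_irrel (l : List ℕ) (a b : ℕ) (ha : a ∈ l) (hb : b ∈ l) :
    l.foldr min a = l.foldr min b := by
  rw [← foldr_min_absorb l a b hb, min_comm a b, foldr_min_absorb l b a ha]

lemma minLabel_perm {s t : LTree} (h : (labels s).Perm (labels t)) :
    minLabel s = minLabel t := by
  show (labels s).foldr min s.rootLabel = (labels t).foldr min t.rootLabel
  haveI hc : LeftCommutative (min : ℕ → ℕ → ℕ) :=
    ⟨fun a b c => by rw [← min_assoc, ← min_assoc, min_comm a b]⟩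
  rw [h.foldr_eq s.rootLabel]
  exact foldr_min_init_irrel _ _ _ (h.subset (rootLabel_mem_labels s)) (rootLabel_mem_labels t)

lemma labelsList_foldr (cs : List LTree) (j : ℕ) :
    (labelsList cs).foldr min j = (cs.map minLabel).foldr min j := by
  induction cs with
  | nil => rfl
  | cons c cs' ih =>
    show (labels c ++ labelsList cs').foldr min j = min (minLabel c) _
    rw [List.foldr_append, ← minLabel_eq_foldr, ih]

lemma minOver_eq (j : ℕ) (cs : List LTree) : minOver j cs = minLabel (node j cs) := by
  show (cs.map minLabel).foldr min j = (labels (node j cs)).foldr min (rootLabel (node j cs))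
  rw [labels_node]
  show _ = (j :: labelsList cs).foldr min j
  show _ = min j ((labelsList cs).foldr min j)
  rw [min_eq_right (foldr_min_le_init _ _), labelsList_foldr]

lemma impr_nil (j : ℕ) : impr (node j []) = 0 := rfl

lemma prop_nil (j : ℕ) : propCount (node j []) = 0 := rfl

lemma impr_cons (j : ℕ) (c : LTree) (cs : List LTree) :
    impr (node j (c :: cs))
      = (if minLabel c < minLabel (node j cs) then 1 else 0) + impr c + impr (node j cs) := by
  rw [← minOver_eq]
  show (improperEdgesAux j (c :: cs)).length = _
  show ((if minLabel c < minOver j cs then [(j, rootLabel c)] else [])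
      ++ improperEdges c ++ improperEdgesAux j cs).length = _
  rw [List.length_append, List.length_append]
  by_cases h : minLabel c < minOver j cs <;> simp [h, impr, improperEdges] <;> omega

lemma prop_cons (j : ℕ) (c : LTree) (cs : List LTree) :
    propCount (node j (c :: cs))
      = (if minLabel c < minLabel (node j cs) then 0 else 1) + propCount c + propCount (node j cs) := by
  rw [← minOver_eq]
  show (properEdgesAux j (c :: cs)).length = _
  show ((if minLabel c < minOver j cs then [] else [(j, rootLabel c)])
      ++ properEdges c ++ properEdgesAux j cs).length = _
  rw [List.length_append, List.length_append]
  by_cases h : minLabel c < minOver j cs <;> simp [h, propCount, properEdges] <;> omega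

/-- The mirror involution (in first-child / next-sibling encoding). -/
def psi : LTree → LTree
  | node r [] => node r []
  | node r (t :: rest) => node (psi t).rootLabel (psi (node r rest) :: (psi t).children)
termination_by T => (labels T).length
decreasing_by
  · simp only [labels_node, labels, labelsList, List.length_cons, List.length_append]
    omega
  · have := labels_length_pos t
    simp only [labels_node, labels, labelsList, List.length_cons, List.length_append]
    omega

theorem psi_psi : ∀ T : LTree, psi (psi T) = T
  | node r [] => by simp [psi]
  | node r (t :: rest) => by
    have h1 := psi_psi t
    have h2 := psi_psi (node r rest)
    rw [psi, psi, eta (psi t), h1, h2]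
    rfl
termination_by T => (labels T).length
decreasing_by
  · simp only [labels_node, labels, labelsList, List.length_cons, List.length_append]
    omega
  · have := labels_length_pos t
    simp only [labels_node, labels, labelsList, List.length_cons, List.length_append]
    omega

theorem labels_psi : ∀ T : LTree, (labels (psi T)).Perm (labels T)
  | node r [] => by simp [psi]
  | node r (t :: rest) => by
    have h1 := labels_psi t
    have h2 := labels_psi (node r rest)
    rw [← eta (psi t), labels_node] at h1
    rw [labels_node] at h2
    rw [psi, labels_node, labels_node, labelsList_cons]
    refine List.Perm.trans List.perm_middle.symm ?_
    refine List.Perm.trans (List.Perm.append h2 h1) ?_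
    exact List.Perm.cons r List.perm_append_comm
termination_by T => (labels T).length
decreasing_by
  · simp only [labels_node, labels, labelsList, List.length_cons, List.length_append]
    omega
  · have := labels_length_pos t
    simp only [labels_node, labels, labelsList, List.length_cons, List.length_append]
    omega

theorem impr_prop_psi : ∀ T : LTree, (labels T).Nodup →
    impr (psi T) = propCount T ∧ propCount (psi T) = impr T
  | node r [] => by
    intro _
    constructor <;> simp [psi, impr_nil, prop_nil]
  | node r (t :: rest) => by
    intro hnd
    rw [labels_node, labelsList_cons] at hnd
    have hnd' := (List.nodup_cons.mp hnd).2
    have hr := (List.nodup_cons.mp hnd).1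
    have hsplit := List.nodup_append.mp hnd'
    have hndt : (labels t).Nodup := hsplit.1
    have hndU : (labels (node r rest)).Nodup := by
      rw [labels_node, List.nodup_cons]
      exact ⟨fun h => hr (List.mem_append_right _ h), hsplit.2.1⟩
    have IH1 := impr_prop_psi t hndt
    have IH2 := impr_prop_psi (node r rest) hndU
    have hne : minLabel t ≠ minLabel (node r rest) := by
      intro h
      have h1 : minLabel t ∈ labels t := minLabel_mem t
      have h2 : minLabel (node r rest) ∈ r :: labelsList rest := by
        rw [← labels_node]; exact minLabel_mem _
      rcases List.mem_cons.mp h2 with he | he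
      · exact hr (List.mem_append_left _ (by rw [← he, ← h]; exact h1))
      · exact hsplit.2.2 _ h1 _ he h
    have e1 : minLabel (psi t) = minLabel t := minLabel_perm (labels_psi t)
    have e2 : minLabel (psi (node r rest)) = minLabel (node r rest) :=
      minLabel_perm (labels_psi (node r rest))
    rw [psi, impr_cons, prop_cons, impr_cons, prop_cons, eta (psi t), e1, e2,
        IH1.1, IH1.2, IH2.1, IH2.2]
    refine ⟨?_, ?_⟩ <;> split_ifs <;> omega
termination_by T => (labels T).length
decreasing_by
  · simp only [labels_node, labels, labelsList, List.length_cons, List.length_append]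
    omega
  · have := labels_length_pos t
    simp only [labels_node, labels, labelsList, List.length_cons, List.length_append]
    omega

lemma isLPT_nodup {n : ℕ} {T : LTree} (h : IsLPT n T) : (labels T).Nodup :=
  h.nodup_iff.mpr List.nodup_range'

lemma isLPT_psi {n : ℕ} {T : LTree} (h : IsLPT n T) : IsLPT n (psi T) :=
  (labels_psi T).trans h

end LTree

/-- For every `n ≥ 1` and `0 ≤ k ≤ n`, the number of labeled plane trees with `n`
edges having exactly `k` improper edges equals the number of labeled plane trees
with `n` edges having exactly `k` proper edges: the statistics `impr` and `prop`
are equidistributed over `𝒫ₙ`. -/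
theorem improper_proper_equidistributed (n k : ℕ) (hn : 1 ≤ n) (hk : k ≤ n) :
    Nat.card {T : LTree // LTree.IsLPT n T ∧ LTree.impr T = k}
      = Nat.card {T : LTree // LTree.IsLPT n T ∧ LTree.propCount T = k} := by
  apply Nat.card_congr
  exact {
    toFun := fun x => ⟨LTree.psi x.1, LTree.isLPT_psi x.2.1,
      by rw [(LTree.impr_prop_psi x.1 (LTree.isLPT_nodup x.2.1)).2, x.2.2]⟩
    invFun := fun x => ⟨LTree.psi x.1, LTree.isLPT_psi x.2.1,
      by rw [(LTree.impr_prop_psi x.1 (LTree.isLPT_nodup x.2.1)).1, x.2.2]⟩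
    left_inv := fun x => Subtype.ext (LTree.psi_psi x.1)
    right_inv := fun x => Subtype.ext (LTree.psi_psi x.1) }
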